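/- Let γ, I₀ be positive reals, 0 < ρ < 1, φ ∈ ℝ, and let m, L, ω₀ > 0 with I_SQL := m·L²·γ⁴/(4ω₀); set D := 1 + 2ρ·cos(2φ) + ρ², Ω± := (±2ργ·sin(2φ) − iγ(1 − ρ²))/D, and ΔΩ± := ∓(I₀·γ³/(2·I_SQL))/Ω±². Then Re(ΔΩ±) = ∓(I₀·γ/(2·I_SQL))·[4ρ²·sin²(2φ) − (1 − ρ²)²]·D²/[4ρ²·sin²(2φ) + (1 − ρ²)²]² and Im(ΔΩ₊) = Im(ΔΩ₋) = −(I₀/I_SQL)·[2ργ·sin(2φ)·(1 − ρ²)]·D²/[4ρ²·sin²(2φ) + (1 − ρ²)²]². In particular, if 0 < φ < π/2 then Im(ΔΩ±) < 0. -/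

import Mathlib

theorem aux_sr_re (γ c D s y : ℝ) (hD : D ≠ 0) (hn : s ^ 2 + γ ^ 2 * y ^ 2 ≠ 0) :
    ((-(c:ℂ)) / ((((s:ℝ):ℂ) - Complex.I * (γ:ℂ) * ((y:ℝ):ℂ)) / ((D:ℝ):ℂ))^2).re
      = -(c * (s^2 - γ^2*y^2) * D^2 / (s^2 + γ^2*y^2)^2) := by
  simp only [Complex.div_re, Complex.div_im, Complex.normSq_apply, Complex.sub_re, Complex.sub_im,
    Complex.mul_re, Complex.mul_im, Complex.I_re, Complex.I_im, Complex.ofReal_re, Complex.ofReal_im,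
    Complex.neg_re, Complex.neg_im, pow_two]
  have h2 : (s*s + γ*y*(γ*y)) ≠ 0 := by intro h; apply hn; nlinarith
  have h2' : (s*s + γ*γ*(y*y)) ≠ 0 := by intro h; apply hn; nlinarith
  have hbig : s ^ 2 * γ ^ 2 * y ^ 2 * 2 + s ^ 4 + γ ^ 4 * y ^ 4 ≠ 0 := by
    intro h; apply hn
    have : (s ^ 2 + γ ^ 2 * y ^ 2) ^ 2 = 0 := by nlinarith
    exact pow_eq_zero_iff (n := 2) (by norm_num) |>.mp this
  field_simp [hbig]
  rw [div_eq_iff ?_]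
  · ring
  · intro h
    have h0 : D ^ 4 * (s ^ 2 + γ ^ 2 * y ^ 2) ^ 2 = 0 := by linear_combination h
    rcases mul_eq_zero.mp h0 with h1 | h1
    · exact pow_ne_zero _ hD h1
    · exact pow_ne_zero _ hn h1

theorem aux_sr_im (γ c D s y : ℝ) (hD : D ≠ 0) (hn : s ^ 2 + γ ^ 2 * y ^ 2 ≠ 0) :
    ((-(c:ℂ)) / ((((s:ℝ):ℂ) - Complex.I * (γ:ℂ) * ((y:ℝ):ℂ)) / ((D:ℝ):ℂ))^2).im
      = -(c * (2*s*γ*y) * D^2 / (s^2 + γ^2*y^2)^2) := by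
  simp only [Complex.div_re, Complex.div_im, Complex.normSq_apply, Complex.sub_re, Complex.sub_im,
    Complex.mul_re, Complex.mul_im, Complex.I_re, Complex.I_im, Complex.ofReal_re, Complex.ofReal_im,
    Complex.neg_re, Complex.neg_im, pow_two]
  have h2 : (s*s + γ*y*(γ*y)) ≠ 0 := by intro h; apply hn; nlinarith
  have h2' : (s*s + γ*γ*(y*y)) ≠ 0 := by intro h; apply hn; nlinarith
  have hbig : s ^ 2 * γ ^ 2 * y ^ 2 * 2 + s ^ 4 + γ ^ 4 * y ^ 4 ≠ 0 := by
    intro h; apply hn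
    have : (s ^ 2 + γ ^ 2 * y ^ 2) ^ 2 = 0 := by nlinarith
    exact pow_eq_zero_iff (n := 2) (by norm_num) |>.mp this
  field_simp [hbig]
  rw [div_eq_iff ?_]
  · ring
  · intro h
    have h0 : D ^ 4 * (s ^ 2 + γ ^ 2 * y ^ 2) ^ 2 = 0 := by linear_combination h
    rcases mul_eq_zero.mp h0 with h1 | h1
    · exact pow_ne_zero _ hD h1
    · exact pow_ne_zero _ hn h1

/-- Leading-order shift `ΔΩ± = ∓(I₀γ³/(2I_SQL))/Ω±²` of the optical resonances:
explicit real and imaginary parts; for `0 < φ < π/2` the imaginary parts are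
negative, i.e. the coupled optical resonances become more stable. -/
theorem optical_resonance_shift
    (m L γ ω₀ I₀ ρ φ : ℝ)
    (hm : 0 < m) (hL : 0 < L) (hγ : 0 < γ) (hω : 0 < ω₀) (hI : 0 < I₀)
    (hρ0 : 0 < ρ) (hρ1 : ρ < 1)
    (D : ℝ) (hD : D = 1 + 2 * ρ * Real.cos (2 * φ) + ρ ^ 2)
    (Ωp Ωm : ℂ)
    (hp : Ωp = (((2 * ρ * γ * Real.sin (2 * φ) : ℝ) : ℂ)
          - Complex.I * (γ : ℂ) * ((1 - ρ ^ 2 : ℝ) : ℂ)) / ((D : ℝ) : ℂ))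
    (hm' : Ωm = (((-(2 * ρ * γ * Real.sin (2 * φ)) : ℝ) : ℂ)
          - Complex.I * (γ : ℂ) * ((1 - ρ ^ 2 : ℝ) : ℂ)) / ((D : ℝ) : ℂ))
    (ISQL : ℝ) (hSQL : ISQL = m * L ^ 2 * γ ^ 4 / (4 * ω₀))
    (ΔΩp ΔΩm : ℂ)
    (hΔp : ΔΩp = -(((I₀ * γ ^ 3 / (2 * ISQL) : ℝ) : ℂ)) / Ωp ^ 2)
    (hΔm : ΔΩm = ((I₀ * γ ^ 3 / (2 * ISQL) : ℝ) : ℂ) / Ωm ^ 2) :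
    ΔΩp.re = -((I₀ * γ / (2 * ISQL)) * (4 * ρ ^ 2 * Real.sin (2 * φ) ^ 2 - (1 - ρ ^ 2) ^ 2)
        * D ^ 2 / (4 * ρ ^ 2 * Real.sin (2 * φ) ^ 2 + (1 - ρ ^ 2) ^ 2) ^ 2) ∧
    ΔΩm.re = (I₀ * γ / (2 * ISQL)) * (4 * ρ ^ 2 * Real.sin (2 * φ) ^ 2 - (1 - ρ ^ 2) ^ 2)
        * D ^ 2 / (4 * ρ ^ 2 * Real.sin (2 * φ) ^ 2 + (1 - ρ ^ 2) ^ 2) ^ 2 ∧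
    ΔΩp.im = -((I₀ / ISQL) * (2 * ρ * γ * Real.sin (2 * φ) * (1 - ρ ^ 2))
        * D ^ 2 / (4 * ρ ^ 2 * Real.sin (2 * φ) ^ 2 + (1 - ρ ^ 2) ^ 2) ^ 2) ∧
    ΔΩm.im = ΔΩp.im ∧
    (0 < φ → φ < Real.pi / 2 → ΔΩp.im < 0 ∧ ΔΩm.im < 0) := by
  have hγ' : γ ≠ 0 := ne_of_gt hγ
  have hDpos : 0 < D := by
    rw [hD]; nlinarith [Real.neg_one_le_cos (2*φ)]
  have hD0 : D ≠ 0 := ne_of_gt hDpos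
  have hy : 0 < 1 - ρ ^ 2 := by nlinarith
  have hISQL : 0 < ISQL := by rw [hSQL]; positivity
  set s : ℝ := Real.sin (2 * φ) with hs
  have hYpos : 0 < 4 * ρ ^ 2 * s ^ 2 + (1 - ρ ^ 2) ^ 2 := by positivity
  have hY : (4 * ρ ^ 2 * s ^ 2 + (1 - ρ ^ 2) ^ 2) ≠ 0 := ne_of_gt hYpos
  set c : ℝ := I₀ * γ ^ 3 / (2 * ISQL) with hc
  have hn : (2 * ρ * γ * s) ^ 2 + γ ^ 2 * (1 - ρ ^ 2) ^ 2 ≠ 0 := by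
    have : 0 < γ ^ 2 * (1 - ρ ^ 2) ^ 2 := by positivity
    nlinarith [sq_nonneg (2 * ρ * γ * s)]
  have hn' : (-(2 * ρ * γ * s)) ^ 2 + γ ^ 2 * (1 - ρ ^ 2) ^ 2 ≠ 0 := by
    rw [neg_pow]; simpa using hn
  have hcast : ((c : ℝ) : ℂ) = -(((-c : ℝ) : ℂ)) := by push_cast; ring
  have hre_p : ΔΩp.re = -((I₀ * γ / (2 * ISQL)) * (4 * ρ ^ 2 * s ^ 2 - (1 - ρ ^ 2) ^ 2)
      * D ^ 2 / (4 * ρ ^ 2 * s ^ 2 + (1 - ρ ^ 2) ^ 2) ^ 2) := by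
    rw [hΔp, hp, aux_sr_re γ c D (2 * ρ * γ * s) (1 - ρ ^ 2) hD0 hn, hc]
    field_simp
    ring
  have him_p : ΔΩp.im = -((I₀ / ISQL) * (2 * ρ * γ * s * (1 - ρ ^ 2))
      * D ^ 2 / (4 * ρ ^ 2 * s ^ 2 + (1 - ρ ^ 2) ^ 2) ^ 2) := by
    rw [hΔp, hp, aux_sr_im γ c D (2 * ρ * γ * s) (1 - ρ ^ 2) hD0 hn, hc]
    field_simp
    ring
  have hre_m : ΔΩm.re = (I₀ * γ / (2 * ISQL)) * (4 * ρ ^ 2 * s ^ 2 - (1 - ρ ^ 2) ^ 2)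
      * D ^ 2 / (4 * ρ ^ 2 * s ^ 2 + (1 - ρ ^ 2) ^ 2) ^ 2 := by
    rw [hΔm, hm', hcast, aux_sr_re γ (-c) D (-(2 * ρ * γ * s)) (1 - ρ ^ 2) hD0 hn', hc]
    field_simp
    ring
  have him_m : ΔΩm.im = -((I₀ / ISQL) * (2 * ρ * γ * s * (1 - ρ ^ 2))
      * D ^ 2 / (4 * ρ ^ 2 * s ^ 2 + (1 - ρ ^ 2) ^ 2) ^ 2) := by
    rw [hΔm, hm', hcast, aux_sr_im γ (-c) D (-(2 * ρ * γ * s)) (1 - ρ ^ 2) hD0 hn', hc]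
    field_simp
    ring
  refine ⟨hre_p, hre_m, him_p, by rw [him_p, him_m], fun h1 h2 => ?_⟩
  have hsin : 0 < s := by
    rw [hs]
    exact Real.sin_pos_of_pos_of_lt_pi (by linarith) (by linarith)
  have hpos : 0 < (I₀ / ISQL) * (2 * ρ * γ * s * (1 - ρ ^ 2))
      * D ^ 2 / (4 * ρ ^ 2 * s ^ 2 + (1 - ρ ^ 2) ^ 2) ^ 2 := by positivity
  constructor
  · rw [him_p]; linarith
  · rw [him_m]; linarith
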